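/- arXiv:1211.1872 — 7 statements merged into one kernel-verified Lean document; each statement's English description precedes it below -/
import Mathlib

section
/- For any complex matrix A ∈ ℂ^{n×n}, the spectral radius of A^◊ equals ρ(A · conj A)^{1/2}, where A^◊ = [[A₂, A₁], [A₁, -A₂]]. -/
open Matrix
open scoped ENNReal NNReal

/-- For a complex matrix `A = A₁ + A₂ i`, the real block matrix `[[A₁, -A₂], [A₂, A₁]]`. -/
noncomputable def heart {n m : ℕ} (A : Matrix (Fin n) (Fin m) ℂ) :
    Matrix (Fin n ⊕ Fin n) (Fin m ⊕ Fin m) ℝ :=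
  Matrix.fromBlocks (A.map Complex.re) (-(A.map Complex.im))
    (A.map Complex.im) (A.map Complex.re)

/-- For a complex matrix `A = A₁ + A₂ i`, the real block matrix `[[A₂, A₁], [A₁, -A₂]]`. -/
noncomputable def diam {n m : ℕ} (A : Matrix (Fin n) (Fin m) ℂ) :
    Matrix (Fin n ⊕ Fin n) (Fin m ⊕ Fin m) ℝ :=
  Matrix.fromBlocks (A.map Complex.im) (A.map Complex.re)
    (A.map Complex.re) (-(A.map Complex.im))

lemma aux_spectrum_fromBlocks_diag {n : ℕ} (B C : Matrix (Fin n) (Fin n) ℂ) :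
    spectrum ℂ (Matrix.fromBlocks B 0 0 C : Matrix (Fin n ⊕ Fin n) (Fin n ⊕ Fin n) ℂ) =
      spectrum ℂ B ∪ spectrum ℂ C := by
  ext μ
  simp only [Set.mem_union, spectrum.mem_iff]
  have h1 : algebraMap ℂ (Matrix (Fin n ⊕ Fin n) (Fin n ⊕ Fin n) ℂ) μ -
      Matrix.fromBlocks B 0 0 C
      = Matrix.fromBlocks (algebraMap ℂ _ μ - B) 0 0 (algebraMap ℂ _ μ - C) := by
    simp only [Algebra.algebraMap_eq_smul_one]
    rw [← Matrix.fromBlocks_one (l := Fin n) (m := Fin n) (α := ℂ), Matrix.fromBlocks_smul]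
    ext (i|i) (j|j) <;> simp [Matrix.fromBlocks]
  rw [h1, Matrix.isUnit_iff_isUnit_det, Matrix.det_fromBlocks_zero₂₁,
    Matrix.isUnit_iff_isUnit_det, Matrix.isUnit_iff_isUnit_det]
  simp only [isUnit_iff_ne_zero, mul_ne_zero_iff]
  tauto

lemma aux_spectrum_map_conj {n : ℕ} (B : Matrix (Fin n) (Fin n) ℂ) :
    spectrum ℂ (B.map (starRingEnd ℂ)) = star '' spectrum ℂ B := by
  ext μ
  have key : ∀ ν : ℂ, ν ∈ spectrum ℂ (B.map (starRingEnd ℂ)) ↔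
      (starRingEnd ℂ) ν ∈ spectrum ℂ B := by
    intro ν
    simp only [spectrum.mem_iff, Matrix.isUnit_iff_isUnit_det, isUnit_iff_ne_zero, not_not]
    have h1 : algebraMap ℂ (Matrix (Fin n) (Fin n) ℂ) ν - B.map (starRingEnd ℂ)
        = (algebraMap ℂ (Matrix (Fin n) (Fin n) ℂ) ((starRingEnd ℂ) ν) - B).map
            (starRingEnd ℂ) := by
      ext i j
      simp [Matrix.map_apply, Matrix.sub_apply, Matrix.one_apply, Algebra.algebraMap_eq_smul_one,
        apply_ite (starRingEnd ℂ)]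
    rw [h1, ← RingHom.mapMatrix_apply, ← RingHom.map_det]
    simp only [map_eq_zero]
  constructor
  · intro h
    exact ⟨(starRingEnd ℂ) μ, (key μ).mp h, by simp [Complex.star_def]⟩
  · rintro ⟨ν, hν, rfl⟩
    rw [key]
    simpa [Complex.star_def] using hν

theorem spectralRadius_diam {n : ℕ} (A : Matrix (Fin n) (Fin n) ℂ) :
    spectralRadius ℂ ((diam A).map (algebraMap ℝ ℂ)) =
      (spectralRadius ℂ (A * A.map (starRingEnd ℂ))) ^ (1 / 2 : ℝ) := by
  classical
  set cA : Matrix (Fin n) (Fin n) ℂ := A.map (starRingEnd ℂ) with hcA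
  set X : Matrix (Fin n) (Fin n) ℂ := A.map (fun z => (z.re : ℂ)) with hX
  set Y : Matrix (Fin n) (Fin n) ℂ := A.map (fun z => (z.im : ℂ)) with hY
  set M : Matrix (Fin n ⊕ Fin n) (Fin n ⊕ Fin n) ℂ := (diam A).map (algebraMap ℝ ℂ) with hM
  set P : Matrix (Fin n) (Fin n) ℂ := X * X + Y * Y with hP
  set Q : Matrix (Fin n) (Fin n) ℂ := Y * X - X * Y with hQ
  have hA : A = X + Complex.I • Y := by
    ext i j
    simp [hX, hY, Matrix.map_apply, Matrix.add_apply, Matrix.smul_apply]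
    rw [mul_comm]
    exact (Complex.re_add_im _).symm ▸ by push_cast [Complex.ext_iff]; simp [mul_comm]
  have hcA' : cA = X - Complex.I • Y := by
    ext i j
    simp [hcA, hX, hY, Matrix.map_apply, Matrix.sub_apply, Matrix.smul_apply, Complex.ext_iff]
  have hAcA : A * cA = P + Complex.I • Q := by
    rw [hA, hcA', hP, hQ]
    simp only [add_mul, mul_sub, sub_mul, Matrix.smul_mul, Matrix.mul_smul, smul_smul,
      Complex.I_mul_I, smul_sub, smul_add, neg_one_smul]
    abel
  have hcAA : cA * A = P - Complex.I • Q := by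
    rw [hA, hcA', hP, hQ]
    simp only [add_mul, mul_add, sub_mul, Matrix.smul_mul, Matrix.mul_smul, smul_smul,
      Complex.I_mul_I, smul_sub, smul_add, neg_one_smul]
    abel
  have hMblock : M = Matrix.fromBlocks Y X X (-Y) := by
    rw [hM]
    unfold diam
    rw [Matrix.fromBlocks_map, Matrix.fromBlocks_inj]
    refine ⟨?_, ?_, ?_, ?_⟩ <;> ext i j <;> simp [Matrix.map_apply, hX, hY]
  have hM2 : M ^ 2 = Matrix.fromBlocks P Q (-Q) P := by
    rw [pow_two, hMblock, Matrix.fromBlocks_multiply, Matrix.fromBlocks_inj]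
    refine ⟨?_, ?_, ?_, ?_⟩
    · rw [hP]; abel
    · rw [hQ]; simp only [Matrix.mul_neg, Matrix.neg_mul, sub_eq_add_neg]
    · rw [hQ]; simp only [Matrix.mul_neg, Matrix.neg_mul, neg_sub, sub_eq_add_neg]; abel
    · rw [hP]; simp only [Matrix.mul_neg, Matrix.neg_mul, neg_neg]
  set S : Matrix (Fin n ⊕ Fin n) (Fin n ⊕ Fin n) ℂ :=
    Matrix.fromBlocks 1 (Complex.I • 1) (Complex.I • 1) 1 with hS
  set T : Matrix (Fin n ⊕ Fin n) (Fin n ⊕ Fin n) ℂ :=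
    Matrix.fromBlocks 1 (-(Complex.I • 1)) (-(Complex.I • 1)) 1 with hT
  have one_eq : (1 : Matrix (Fin n ⊕ Fin n) (Fin n ⊕ Fin n) ℂ)
      = Matrix.fromBlocks 1 0 0 1 := Matrix.fromBlocks_one.symm
  have hST : S * T = (2 : ℂ) • (1 : Matrix (Fin n ⊕ Fin n) (Fin n ⊕ Fin n) ℂ) := by
    rw [hS, hT, Matrix.fromBlocks_multiply, one_eq, Matrix.fromBlocks_smul,
      Matrix.fromBlocks_inj]
    refine ⟨?_, ?_, ?_, ?_⟩ <;>
      simp [Matrix.smul_mul, Matrix.mul_smul, smul_smul, Complex.I_mul_I, two_smul]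
  have hTS : T * S = (2 : ℂ) • (1 : Matrix (Fin n ⊕ Fin n) (Fin n ⊕ Fin n) ℂ) := by
    rw [hS, hT, Matrix.fromBlocks_multiply, one_eq, Matrix.fromBlocks_smul,
      Matrix.fromBlocks_inj]
    refine ⟨?_, ?_, ?_, ?_⟩ <;>
      simp [Matrix.smul_mul, Matrix.mul_smul, smul_smul, Complex.I_mul_I, two_smul]
  set u : (Matrix (Fin n ⊕ Fin n) (Fin n ⊕ Fin n) ℂ)ˣ :=
    ⟨S, (2 : ℂ)⁻¹ • T,
      by rw [Matrix.mul_smul, hST, smul_smul]; norm_num,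
      by rw [Matrix.smul_mul, hTS, smul_smul]; norm_num⟩ with hu
  set D : Matrix (Fin n ⊕ Fin n) (Fin n ⊕ Fin n) ℂ :=
    Matrix.fromBlocks (A * cA) 0 0 (cA * A) with hD
  have M2S : M ^ 2 * S = S * D := by
    rw [hM2, hS, hD, Matrix.fromBlocks_multiply, Matrix.fromBlocks_multiply, hAcA, hcAA,
      Matrix.fromBlocks_inj]
    refine ⟨?_, ?_, ?_, ?_⟩ <;>
      simp only [hP, hQ, Matrix.mul_one, Matrix.one_mul, Matrix.mul_zero, Matrix.zero_mul,
        Matrix.smul_mul, Matrix.mul_smul, add_zero, zero_add, Matrix.neg_mul,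
        Matrix.mul_neg, smul_add, smul_sub, smul_smul, Complex.I_mul_I, neg_one_smul] <;>
      module
  have hsim : M ^ 2 = (u : Matrix (Fin n ⊕ Fin n) (Fin n ⊕ Fin n) ℂ) * D *
      ((u⁻¹ : (Matrix (Fin n ⊕ Fin n) (Fin n ⊕ Fin n) ℂ)ˣ) : Matrix (Fin n ⊕ Fin n) (Fin n ⊕ Fin n) ℂ) := by
    rw [Units.eq_mul_inv_iff_mul_eq]
    exact M2S
  have hconjrel : (A * cA).map (starRingEnd ℂ) = cA * A := by
    rw [Matrix.map_mul]
    congr 1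
    ext i j
    simp [hcA, Matrix.map_apply]
  have hσ : spectrum ℂ (M ^ 2) = spectrum ℂ (A * cA) ∪ star '' spectrum ℂ (A * cA) := by
    rw [hsim, spectrum.units_conjugate, hD, aux_spectrum_fromBlocks_diag, ← hconjrel,
      aux_spectrum_map_conj]
  have hrad2 : spectralRadius ℂ (M ^ 2) = spectralRadius ℂ (A * cA) := by
    unfold spectralRadius
    rw [hσ, iSup_union]
    simp only [iSup_image, nnnorm_star, sup_idem]
  have hpow : spectrum ℂ (M ^ 2) = (· ^ 2) '' spectrum ℂ M :=
    spectrum.map_pow_of_pos M (by norm_num)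
  have h2 : (0 : ℝ) < 2 := by norm_num
  have key : ∀ k : ℂ, (‖k ^ 2‖₊ : ℝ≥0∞)
      = ENNReal.orderIsoRpow 2 h2 (‖k‖₊ : ℝ≥0∞) := by
    intro k
    rw [ENNReal.orderIsoRpow_apply, show ((2:ℝ)) = ((2:ℕ):ℝ) by norm_num,
      ENNReal.rpow_natCast, ← ENNReal.coe_pow, nnnorm_pow]
  have hr2 : spectralRadius ℂ (M ^ 2) = spectralRadius ℂ M ^ (2 : ℝ) := by
    unfold spectralRadius
    calc ⨆ k ∈ spectrum ℂ (M ^ 2), (‖k‖₊ : ℝ≥0∞)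
        = ⨆ k ∈ spectrum ℂ M, (‖k ^ 2‖₊ : ℝ≥0∞) := by rw [hpow, iSup_image]
      _ = ⨆ k ∈ spectrum ℂ M, ENNReal.orderIsoRpow 2 h2 ((‖k‖₊ : ℝ≥0∞)) := by
          simp only [key]
      _ = ENNReal.orderIsoRpow 2 h2 (⨆ k ∈ spectrum ℂ M, (‖k‖₊ : ℝ≥0∞)) := by
          rw [OrderIso.map_iSup]
          exact iSup_congr fun k => (OrderIso.map_iSup _ _).symm
      _ = (⨆ k ∈ spectrum ℂ M, (‖k‖₊ : ℝ≥0∞)) ^ (2 : ℝ) :=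
          ENNReal.orderIsoRpow_apply 2 h2 _
  have hfinal : spectralRadius ℂ (A * cA) = spectralRadius ℂ M ^ (2 : ℝ) :=
    hrad2 ▸ hr2
  rw [hfinal, ← ENNReal.rpow_mul]
  norm_num
end

section
/- The real matrix A^◊ = [[A₂, A₁], [A₁, -A₂]] is normal if and only if A is con-normal, namely A^* A = conj(A A^*). -/
open Matrix

private lemma map_re_mulconj {n : ℕ} (A : Matrix (Fin n) (Fin n) ℂ) :
    (Aᴴ * A).map Complex.re
      = (A.map Complex.re)ᵀ * (A.map Complex.re) + (A.map Complex.im)ᵀ * (A.map Complex.im) := by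
  ext i j
  simp only [Matrix.mul_apply, Matrix.map_apply, Matrix.conjTranspose_apply,
    Matrix.transpose_apply, Complex.mul_re, Complex.re_sum, Complex.star_def, Complex.conj_re,
    Complex.conj_im, Matrix.add_apply]
  rw [← Finset.sum_add_distrib]
  exact Finset.sum_congr rfl fun k _ => by ring

private lemma map_im_mulconj {n : ℕ} (A : Matrix (Fin n) (Fin n) ℂ) :
    (Aᴴ * A).map Complex.im
      = (A.map Complex.re)ᵀ * (A.map Complex.im) - (A.map Complex.im)ᵀ * (A.map Complex.re) := by
  ext i j
  simp only [Matrix.mul_apply, Matrix.map_apply, Matrix.conjTranspose_apply,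
    Matrix.transpose_apply, Complex.mul_im, Complex.im_sum, Complex.star_def, Complex.conj_re,
    Complex.conj_im, Matrix.sub_apply]
  rw [← Finset.sum_sub_distrib]
  exact Finset.sum_congr rfl fun k _ => by ring

private lemma map_re_conjmul {n : ℕ} (A : Matrix (Fin n) (Fin n) ℂ) :
    ((A * Aᴴ).map (starRingEnd ℂ)).map Complex.re
      = (A.map Complex.re) * (A.map Complex.re)ᵀ + (A.map Complex.im) * (A.map Complex.im)ᵀ := by
  ext i j
  simp only [Matrix.mul_apply, Matrix.map_apply, Matrix.conjTranspose_apply,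
    Matrix.transpose_apply, map_sum, Complex.mul_re, Complex.re_sum, Complex.star_def,
    Complex.conj_re, Complex.conj_im, Matrix.add_apply]
  rw [← Finset.sum_add_distrib]
  exact Finset.sum_congr rfl fun k _ => by ring

private lemma map_im_conjmul {n : ℕ} (A : Matrix (Fin n) (Fin n) ℂ) :
    ((A * Aᴴ).map (starRingEnd ℂ)).map Complex.im
      = (A.map Complex.re) * (A.map Complex.im)ᵀ - (A.map Complex.im) * (A.map Complex.re)ᵀ := by
  ext i j
  simp only [Matrix.mul_apply, Matrix.map_apply, Matrix.conjTranspose_apply,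
    Matrix.transpose_apply, map_sum, Complex.mul_im, Complex.im_sum, Complex.star_def,
    Complex.conj_re, Complex.conj_im, Matrix.sub_apply]
  rw [← Finset.sum_sub_distrib]
  exact Finset.sum_congr rfl fun k _ => by ring

theorem diam_normal_iff {n : ℕ} (A : Matrix (Fin n) (Fin n) ℂ) :
    diam A * (diam A)ᵀ = (diam A)ᵀ * diam A ↔
      Aᴴ * A = (A * Aᴴ).map (starRingEnd ℂ) := by
  set B := A.map Complex.re with hB
  set C := A.map Complex.im with hC
  -- split the complex matrix equation into real/imaginary parts
  have hsplit : (Aᴴ * A = (A * Aᴴ).map (starRingEnd ℂ)) ↔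
      (Bᵀ * B + Cᵀ * C = B * Bᵀ + C * Cᵀ ∧ Bᵀ * C - Cᵀ * B = B * Cᵀ - C * Bᵀ) := by
    constructor
    · intro h
      constructor
      · rw [← map_re_mulconj A, ← map_re_conjmul A, h]
      · rw [← map_im_mulconj A, ← map_im_conjmul A, h]
    · rintro ⟨h1, h2⟩
      ext i j
      rw [← map_re_mulconj A, ← map_re_conjmul A] at h1
      rw [← map_im_mulconj A, ← map_im_conjmul A] at h2
      rw [← Matrix.ext_iff] at h1 h2
      exact Complex.ext (h1 i j) (h2 i j)
  rw [hsplit]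
  -- compute the block products
  have hD : diam A = Matrix.fromBlocks C B B (-C) := rfl
  rw [hD, Matrix.fromBlocks_transpose, Matrix.fromBlocks_multiply, Matrix.fromBlocks_multiply]
  rw [Matrix.fromBlocks_inj]
  simp only [Matrix.transpose_neg, Matrix.neg_mul, Matrix.mul_neg, neg_neg,
    ← sub_eq_add_neg]
  constructor
  · rintro ⟨h1, h2, -, -⟩
    constructor
    · exact (add_comm _ _).trans (h1.symm.trans (add_comm _ _))
    · have := congrArg Neg.neg h2
      simpa [neg_sub] using this.symm
  · rintro ⟨h1, h2⟩
    refine ⟨?_, ?_, ?_, ?_⟩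
    · exact (add_comm _ _).trans (h1.symm.trans (add_comm _ _))
    · have := congrArg Neg.neg h2
      simpa [neg_sub] using this.symm
    · exact h2.symm
    · exact h1.symm
end

section
/- Let A ∈ ℂ^{n×n} be invertible. Then an invertible Hermitian matrix X solves X + A^* (conj X)⁻¹ A = Iₙ if and only if Y = Iₙ − conj X solves Y + A (conj Y)⁻¹ A^* = Iₙ (in particular Y is invertible). -/
open Matrix
open scoped ComplexOrder

lemma key {n : ℕ} (A B C : Matrix (Fin n) (Fin n) ℂ)
    (hA : IsUnit A.det) (hC : IsUnit C.det)
    (h : Aᴴ * C⁻¹ * A = B) : A * B⁻¹ * Aᴴ = C := by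
  have hAH : IsUnit Aᴴ.det := by
    rw [Matrix.det_conjTranspose]; exact hA.star
  subst h
  rw [Matrix.mul_inv_rev, Matrix.mul_inv_rev, Matrix.nonsing_inv_nonsing_inv _ hC]
  calc A * (A⁻¹ * (C * (Aᴴ)⁻¹)) * Aᴴ
      = (A * A⁻¹) * C * ((Aᴴ)⁻¹ * Aᴴ) := by simp only [Matrix.mul_assoc]
    _ = C := by rw [Matrix.mul_nonsing_inv _ hA, Matrix.nonsing_inv_mul _ hAH, Matrix.one_mul, Matrix.mul_one]

theorem eq_iff_dual {n : ℕ} (A X : Matrix (Fin n) (Fin n) ℂ)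
    (hA : IsUnit A.det) (hX : X.IsHermitian) (hXinv : IsUnit X.det)
    (hY : IsUnit (1 - X.map (starRingEnd ℂ)).det) :
    X + Aᴴ * (X.map (starRingEnd ℂ))⁻¹ * A = 1 ↔
      (1 - X.map (starRingEnd ℂ)) +
        A * ((1 - X.map (starRingEnd ℂ)).map (starRingEnd ℂ))⁻¹ * Aᴴ = 1 := by
  set C := X.map (starRingEnd ℂ) with hCdef
  have hC : IsUnit C.det := by
    have := RingHom.map_det (starRingEnd ℂ) X
    rw [RingHom.mapMatrix_apply] at this
    rw [hCdef, ← this]; exact hXinv.map _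
  have h1X : ((1 : Matrix (Fin n) (Fin n) ℂ) - C).map (starRingEnd ℂ) = 1 - X := by
    ext i j
    simp [hCdef, Matrix.one_apply, Matrix.map_apply, apply_ite (starRingEnd ℂ)]
  have h1Xdet : IsUnit ((1 : Matrix (Fin n) (Fin n) ℂ) - X).det := by
    have := RingHom.map_det (starRingEnd ℂ) (1 - C)
    rw [RingHom.mapMatrix_apply] at this
    rw [← h1X, ← this]; exact hY.map _
  rw [h1X]
  constructor
  · intro h
    have h' : Aᴴ * C⁻¹ * A = 1 - X := eq_sub_of_add_eq' h
    have hk := key A (1 - X) C hA hC h'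
    rw [hk]
    abel
  · intro h
    have h' : A * (1 - X)⁻¹ * Aᴴ = C := by
      have := eq_sub_of_add_eq' h
      rwa [sub_sub_cancel] at this
    have hk := key Aᴴ C (1 - X) (by rw [Matrix.det_conjTranspose]; exact hA.star) h1Xdet
      (by rwa [conjTranspose_conjTranspose])
    rw [conjTranspose_conjTranspose] at hk
    rw [hk]
    abel
end

section
/- Let A ∈ ℂ^{n×n}. A Hermitian positive definite matrix X satisfies X + A^* (conj X)⁻¹ A = Iₙ if and only if the real symmetric positive definite matrix W = X^♥ satisfies W + (A^◊)ᵀ W⁻¹ A^◊ = I_{2n}. -/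
open Matrix
open scoped ComplexOrder

lemma heart_add {n m : ℕ} (A B : Matrix (Fin n) (Fin m) ℂ) :
    heart (A + B) = heart A + heart B := by
  unfold heart
  rw [Matrix.fromBlocks_add]
  ext (i|i) (j|j) <;> simp [Matrix.map_apply] <;> ring

lemma heart_one {n : ℕ} : heart (1 : Matrix (Fin n) (Fin n) ℂ) = 1 := by
  unfold heart
  rw [← Matrix.fromBlocks_one]
  ext (i|i) (j|j) <;> simp [Matrix.one_apply] <;> split <;> simp

lemma heart_mul {n m k : ℕ} (A : Matrix (Fin n) (Fin m) ℂ) (B : Matrix (Fin m) (Fin k) ℂ) :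
    heart (A * B) = heart A * heart B := by
  unfold heart
  rw [Matrix.fromBlocks_multiply]
  ext (i|i) (j|j) <;>
    simp [Matrix.mul_apply, Complex.mul_re, Complex.mul_im, Finset.sum_add_distrib,
      Finset.sum_sub_distrib] <;> ring

lemma heart_inj {n m : ℕ} (A B : Matrix (Fin n) (Fin m) ℂ) (h : heart A = heart B) : A = B := by
  ext i j
  have h1 := congrFun (congrFun h (Sum.inl i)) (Sum.inl j)
  have h2 := congrFun (congrFun h (Sum.inr i)) (Sum.inl j)
  simp [heart, Matrix.fromBlocks, Matrix.map_apply] at h1 h2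
  exact Complex.ext h1 h2

lemma heart_transpose {n m : ℕ} (A : Matrix (Fin n) (Fin m) ℂ) :
    (heart A)ᵀ = heart Aᴴ := by
  unfold heart
  rw [Matrix.fromBlocks_transpose]
  ext (i|i) (j|j) <;> simp [Matrix.map_apply, Matrix.conjTranspose_apply]

noncomputable def swapM (n : ℕ) : Matrix (Fin n ⊕ Fin n) (Fin n ⊕ Fin n) ℝ :=
  Matrix.fromBlocks 0 1 1 0

lemma swapM_mul_swapM (n : ℕ) : swapM n * swapM n = 1 := by
  unfold swapM
  rw [Matrix.fromBlocks_multiply]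
  simp [← Matrix.fromBlocks_one]

lemma swapM_transpose (n : ℕ) : (swapM n)ᵀ = swapM n := by
  unfold swapM
  rw [Matrix.fromBlocks_transpose]
  simp

lemma diam_eq {n m : ℕ} (A : Matrix (Fin n) (Fin m) ℂ) :
    diam A = swapM n * heart A := by
  unfold diam swapM heart
  rw [Matrix.fromBlocks_multiply]
  simp

lemma heart_conj {n : ℕ} (X : Matrix (Fin n) (Fin n) ℂ) :
    heart (X.map (starRingEnd ℂ)) = swapM n * heart X * swapM n := by
  unfold heart swapM
  rw [Matrix.fromBlocks_multiply, Matrix.fromBlocks_multiply]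
  ext (i|i) (j|j) <;> simp [Matrix.map_apply]

lemma heart_inv {n : ℕ} (X : Matrix (Fin n) (Fin n) ℂ) (h : IsUnit X.det) :
    heart X⁻¹ = (heart X)⁻¹ := by
  have h1 : heart X * heart X⁻¹ = 1 := by
    rw [← heart_mul, Matrix.mul_nonsing_inv _ h, heart_one]
  exact (Matrix.inv_eq_right_inv h1).symm

theorem eq_iff_real_eq {n : ℕ} (A X : Matrix (Fin n) (Fin n) ℂ) (hX : X.PosDef) :
    X + Aᴴ * (X.map (starRingEnd ℂ))⁻¹ * A = 1 ↔
      heart X + (diam A)ᵀ * (heart X)⁻¹ * diam A = 1 := by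
  have hXdet : IsUnit X.det := hX.det_pos.ne'.isUnit
  have hmd := (starRingEnd ℂ).map_det X
  rw [RingHom.mapMatrix_apply] at hmd
  have hXc : IsUnit (X.map (starRingEnd ℂ)).det := by
    rw [← hmd]; exact hXdet.map (starRingEnd ℂ)
  have hconjinv : (X.map (starRingEnd ℂ))⁻¹ = X⁻¹.map (starRingEnd ℂ) := by
    apply Matrix.inv_eq_right_inv
    have : X.map (starRingEnd ℂ) * X⁻¹.map (starRingEnd ℂ)
        = (X * X⁻¹).map (starRingEnd ℂ) := (Matrix.map_mul).symm
    rw [this, Matrix.mul_nonsing_inv _ hXdet,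
      Matrix.map_one _ (map_zero _) (map_one _)]
  have key : (diam A)ᵀ * (heart X)⁻¹ * diam A
      = heart (Aᴴ * (X.map (starRingEnd ℂ))⁻¹ * A) := by
    rw [heart_mul, heart_mul, hconjinv, heart_conj, heart_inv _ hXdet,
      diam_eq, Matrix.transpose_mul, swapM_transpose, heart_transpose]
    noncomm_ring
  rw [key, ← heart_add, ← heart_one]
  exact ⟨fun h => by rw [h], heart_inj _ _⟩
end

section
/- If the equation X + A^* (conj X)⁻¹ A = Iₙ has a Hermitian positive definite solution X, then Iₙ − A A^* − conj(A^* A) is positive definite; in particular ‖A‖ < 1. -/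
open Matrix
open scoped ComplexOrder

/-- The operator norm (spectral norm) of a matrix, i.e. the norm of the induced
linear map between Euclidean spaces. -/
noncomputable def opNorm {𝕜 : Type*} [RCLike 𝕜] {n m : Type*} [Fintype n] [Fintype m]
    [DecidableEq m] (A : Matrix n m 𝕜) : ℝ :=
  ‖LinearMap.toContinuousLinearMap (Matrix.toEuclideanLin A)‖

section Aux

variable {m p : Type*} [Fintype m] [DecidableEq m] [Fintype p] [DecidableEq p]

omit [DecidableEq m] [DecidableEq p] in
lemma aux_elim_ne_zero_left {u : m → ℂ} {v : p → ℂ} (hu : u ≠ 0) : Sum.elim u v ≠ 0 := by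
  intro h
  exact hu (funext fun i => congrFun h (Sum.inl i))

omit [DecidableEq m] [DecidableEq p] in
lemma aux_elim_ne_zero_cases {x : m ⊕ p → ℂ} (hx : x ≠ 0) :
    (x ∘ Sum.inl) ≠ 0 ∨ (x ∘ Sum.inr) ≠ 0 := by
  by_contra hc
  push_neg at hc
  apply hx
  funext i
  cases i with
  | inl i => exact congrFun hc.1 i
  | inr i => exact congrFun hc.2 i

lemma aux_posDef_fromBlocks₁₁ {A : Matrix m m ℂ} (B : Matrix m p ℂ) (D : Matrix p p ℂ)
    (hA : A.PosDef) [Invertible A] (hS : (D - Bᴴ * A⁻¹ * B).PosDef) :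
    (fromBlocks A B Bᴴ D).PosDef := by
  refine .of_dotProduct_mulVec_pos ((Matrix.IsHermitian.fromBlocks₁₁ B D hA.1).mpr hS.1) fun x hx => ?_
  rw [← Sum.elim_comp_inl_inr x, dotProduct_mulVec,
    Matrix.schur_complement_eq₁₁ B D _ _ hA.1]
  rcases aux_elim_ne_zero_cases hx with hu | hv
  · rcases eq_or_ne (x ∘ Sum.inr) 0 with hv | hv
    · have hw : (x ∘ Sum.inl) + (A⁻¹ * B) *ᵥ (x ∘ Sum.inr) ≠ 0 := by
        rw [hv]; simpa using hu
      apply add_pos_of_pos_of_nonneg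
      · rw [← dotProduct_mulVec]; exact hA.dotProduct_mulVec_pos hw
      · rw [← dotProduct_mulVec]; exact hS.posSemidef.dotProduct_mulVec_nonneg _
    · apply add_pos_of_nonneg_of_pos
      · rw [← dotProduct_mulVec]; exact hA.posSemidef.dotProduct_mulVec_nonneg _
      · rw [← dotProduct_mulVec]; exact hS.dotProduct_mulVec_pos hv
  · apply add_pos_of_nonneg_of_pos
    · rw [← dotProduct_mulVec]; exact hA.posSemidef.dotProduct_mulVec_nonneg _
    · rw [← dotProduct_mulVec]; exact hS.dotProduct_mulVec_pos hv

lemma aux_posDef_fromBlocks₂₂ (A : Matrix m m ℂ) (B : Matrix m p ℂ) {D : Matrix p p ℂ}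
    (hD : D.PosDef) [Invertible D] (h : (fromBlocks A B Bᴴ D).PosDef) :
    (A - B * D⁻¹ * Bᴴ).PosDef := by
  refine .of_dotProduct_mulVec_pos ((Matrix.IsHermitian.fromBlocks₂₂ A B hD.1).mp h.1) fun u hu => ?_
  have := h.dotProduct_mulVec_pos (x := Sum.elim u (-((D⁻¹ * Bᴴ) *ᵥ u))) (aux_elim_ne_zero_left hu)
  rw [dotProduct_mulVec, Matrix.schur_complement_eq₂₂ A B _ _ hD.1] at this
  rw [dotProduct_mulVec]
  simpa using this

omit [DecidableEq m] in
lemma aux_posDef_map_star {M : Matrix m m ℂ} (hM : M.PosDef) :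
    (M.map (starRingEnd ℂ)).PosDef := by
  have h1 : M.map (starRingEnd ℂ) = Mᵀ := by
    have hh := hM.isHermitian
    rw [Matrix.IsHermitian] at hh
    calc M.map (starRingEnd ℂ) = (Mᴴ).map (starRingEnd ℂ) := by rw [hh]
    _ = Mᵀ := by ext i j; simp [Matrix.conjTranspose_apply]
  rw [h1]; exact hM.transpose

end Aux

theorem necessary_condition {n : ℕ} (A : Matrix (Fin n) (Fin n) ℂ)
    (h : ∃ X : Matrix (Fin n) (Fin n) ℂ, X.PosDef ∧
      X + Aᴴ * (X.map (starRingEnd ℂ))⁻¹ * A = 1) :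
    (1 - A * Aᴴ - (Aᴴ * A).map (starRingEnd ℂ)).PosDef ∧ opNorm A < 1 := by
  obtain ⟨X, hX, heq⟩ := h
  set c : ℂ →+* ℂ := (starRingEnd ℂ)
  set Y : Matrix (Fin n) (Fin n) ℂ := X.map c with hYdef
  have hY : Y.PosDef := aux_posDef_map_star hX
  haveI : Invertible X := hX.isUnit.invertible
  haveI : Invertible Y := hY.isUnit.invertible
  haveI : Invertible (X⁻¹) := hX.inv.isUnit.invertible
  -- basic map facts
  have hYmapc : Y.map c = X := by
    ext i j; simp [hYdef, Matrix.map_apply]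
  have hAT : (Aᴴ).map ⇑c = Aᵀ := by
    ext i j; simp [Matrix.conjTranspose_apply, Matrix.map_apply]
  have hXeq : X = 1 - Aᴴ * Y⁻¹ * A := by
    rw [← heq]; abel
  have h1X : (1 - X).PosSemidef := by
    have : (1 : Matrix (Fin n) (Fin n) ℂ) - X = Aᴴ * Y⁻¹ * A := by rw [hXeq]; abel
    rw [this]
    exact hY.inv.posSemidef.conjTranspose_mul_mul_same A
  have hmapinv : (Y⁻¹).map ⇑c = X⁻¹ := by
    symm
    apply Matrix.inv_eq_left_inv
    have h2 : ((Y⁻¹).map ⇑c) * (Y.map ⇑c) = (Y⁻¹ * Y).map ⇑c := (Matrix.map_mul).symm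
    rw [← hYmapc, h2, Matrix.nonsing_inv_mul Y hY.det_pos.ne'.isUnit]
    exact Matrix.map_one _ (map_zero c) (map_one c)
  have heq2 : Y + Aᵀ * X⁻¹ * (A.map ⇑c) = 1 := by
    have h' := congrArg (fun M : Matrix (Fin n) (Fin n) ℂ => M.map ⇑c) heq
    rw [Matrix.map_add ⇑c (map_add c), Matrix.map_mul, Matrix.map_mul, hmapinv, hAT,
      Matrix.map_one ⇑c (map_zero c) (map_one c)] at h'
    exact h'
  -- X⁻¹ - 1 is positive semidefinite
  haveI : Invertible (1 : Matrix (Fin n) (Fin n) ℂ) := invertibleOne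
  have hXi : (X⁻¹ - 1).PosSemidef := by
    have hb : (fromBlocks (1 : Matrix (Fin n) (Fin n) ℂ) (1 : Matrix (Fin n) (Fin n) ℂ)
        (1 : Matrix (Fin n) (Fin n) ℂ)ᴴ X⁻¹).PosSemidef := by
      rw [Matrix.PosDef.fromBlocks₂₂ _ _ hX.inv]
      simpa [Matrix.inv_inv_of_invertible] using h1X
    have := (Matrix.PosDef.fromBlocks₁₁ (1 : Matrix (Fin n) (Fin n) ℂ) (X⁻¹)
      Matrix.PosDef.one).mp hb
    simpa using this
  -- Y - A Aᴴ is positive definite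
  have hYA : (Y - A * Aᴴ).PosDef := by
    have hb : (fromBlocks Y A Aᴴ (1 : Matrix (Fin n) (Fin n) ℂ)).PosDef := by
      refine aux_posDef_fromBlocks₁₁ A 1 hY ?_
      have : (1 : Matrix (Fin n) (Fin n) ℂ) - Aᴴ * Y⁻¹ * A = X := by rw [hXeq]
      rw [this]; exact hX
    have := aux_posDef_fromBlocks₂₂ Y A Matrix.PosDef.one hb
    simpa using this
  -- the correction term is positive semidefinite
  have hterm : (Aᵀ * (X⁻¹ - 1) * (A.map ⇑c)).PosSemidef := by
    have hc : (A.map ⇑c)ᴴ = Aᵀ := by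
      ext i j; simp [Matrix.conjTranspose_apply, Matrix.map_apply]
    have := hXi.conjTranspose_mul_mul_same (A.map ⇑c)
    rwa [hc] at this
  -- decomposition of the goal matrix
  have hdecomp : (1 : Matrix (Fin n) (Fin n) ℂ) - A * Aᴴ - (Aᴴ * A).map ⇑c
      = (Y - A * Aᴴ) + Aᵀ * (X⁻¹ - 1) * (A.map ⇑c) := by
    have hmapAA : (Aᴴ * A).map ⇑c = Aᵀ * (A.map ⇑c) := by
      rw [Matrix.map_mul, hAT]
    have hexp : Aᵀ * (X⁻¹ - 1) * (A.map ⇑c)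
        = Aᵀ * X⁻¹ * (A.map ⇑c) - Aᵀ * (A.map ⇑c) := by noncomm_ring
    rw [hmapAA, hexp, ← heq2]
    abel
  have hG : ((1 : Matrix (Fin n) (Fin n) ℂ) - A * Aᴴ - (Aᴴ * A).map ⇑c).PosDef := by
    rw [hdecomp]; exact hYA.add_posSemidef hterm
  refine ⟨hG, ?_⟩
  -- from hG, deduce 1 - Aᴴ A is positive definite
  have hAA1 : ((1 : Matrix (Fin n) (Fin n) ℂ) - (Aᴴ * A).map ⇑c).PosDef := by
    have : (1 : Matrix (Fin n) (Fin n) ℂ) - (Aᴴ * A).map ⇑c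
        = ((1 : Matrix (Fin n) (Fin n) ℂ) - A * Aᴴ - (Aᴴ * A).map ⇑c) + A * Aᴴ := by abel
    rw [this]
    exact hG.add_posSemidef (Matrix.posSemidef_self_mul_conjTranspose A)
  have hAA : ((1 : Matrix (Fin n) (Fin n) ℂ) - Aᴴ * A).PosDef := by
    have := aux_posDef_map_star hAA1
    have hmm : ((1 : Matrix (Fin n) (Fin n) ℂ) - (Aᴴ * A).map ⇑c).map ⇑c
        = (1 : Matrix (Fin n) (Fin n) ℂ) - Aᴴ * A := by
      ext i j
      simp [Matrix.map_apply, Matrix.sub_apply, Matrix.one_apply, Matrix.mul_apply,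
        map_sum, apply_ite]
      rfl
    rwa [hmm] at this
  -- now prove the norm bound
  set T := LinearMap.toContinuousLinearMap (Matrix.toEuclideanLin A) with hT
  show ‖T‖ < 1
  have key : ∀ x : EuclideanSpace ℂ (Fin n), x ≠ 0 → ‖T x‖ < ‖x‖ := by
    intro x hx
    set v : Fin n → ℂ := (WithLp.equiv 2 (Fin n → ℂ)) x with hv
    have hvne : v ≠ 0 := by
      intro h0
      apply hx
      have := congrArg (WithLp.equiv 2 (Fin n → ℂ)).symm h0
      simpa [hv] using this
    have hq := hAA.dotProduct_mulVec_pos hvne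
    rw [Matrix.sub_mulVec, Matrix.one_mulVec, dotProduct_sub] at hq
    rw [sub_pos] at hq
    have hrw : star v ⬝ᵥ (Aᴴ * A) *ᵥ v = star (A *ᵥ v) ⬝ᵥ (A *ᵥ v) := by
      rw [← Matrix.mulVec_mulVec, dotProduct_mulVec, ← Matrix.star_mulVec]
    rw [hrw] at hq
    have hdot : ∀ w : Fin n → ℂ, star w ⬝ᵥ w = ((∑ i, ‖w i‖ ^ 2 : ℝ) : ℂ) := by
      intro w
      have hz : ∀ z : ℂ, (starRingEnd ℂ) z * z = ((‖z‖ ^ 2 : ℝ) : ℂ) := by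
        intro z
        rw [mul_comm, Complex.mul_conj]
        norm_cast
        rw [Complex.normSq_eq_norm_sq]
      simp only [dotProduct, Pi.star_apply, Complex.star_def, hz]
      rw [Complex.ofReal_sum]
    rw [hdot, hdot, Complex.real_lt_real] at hq
    have hTx : T x = (WithLp.equiv 2 (Fin n → ℂ)).symm (A *ᵥ v) := by
      rw [hT]
      simp [Matrix.toEuclideanLin_apply, hv]
    rw [EuclideanSpace.norm_eq, EuclideanSpace.norm_eq]
    apply Real.sqrt_lt_sqrt (by positivity)
    have h1 : ∀ i, ‖(T x) i‖ = ‖(A *ᵥ v) i‖ := by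
      intro i; rw [hTx]; rfl
    have h2 : ∀ i, ‖x i‖ = ‖v i‖ := fun i => rfl
    simp only [h1, h2]
    exact hq
  rcases Nat.eq_zero_or_pos n with hn | hn
  · subst hn
    have hle : ‖T‖ ≤ 0 := by
      apply ContinuousLinearMap.opNorm_le_bound _ le_rfl
      intro x
      have : ‖T x‖ = 0 := by
        rw [EuclideanSpace.norm_eq]
        simp
      rw [this]
      positivity
    linarith
  · haveI : Nonempty (Fin n) := ⟨⟨0, hn⟩⟩
    have hsne : (Metric.sphere (0 : EuclideanSpace ℂ (Fin n)) 1).Nonempty := by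
      refine ⟨EuclideanSpace.single ⟨0, hn⟩ (1 : ℂ), ?_⟩
      rw [mem_sphere_zero_iff_norm, EuclideanSpace.norm_single]
      simp
    obtain ⟨x₀, hx₀mem, hx₀max⟩ := (isCompact_sphere (0 : EuclideanSpace ℂ (Fin n)) 1).exists_isMaxOn
      hsne ((continuous_norm.comp T.continuous).continuousOn)
    have hx₀ : ‖x₀‖ = 1 := mem_sphere_zero_iff_norm.mp hx₀mem
    have hx₀ne : x₀ ≠ 0 := by
      intro h0; rw [h0, norm_zero] at hx₀; exact one_ne_zero hx₀.symm
    have hc1 : ‖T x₀‖ < 1 := by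
      have := key x₀ hx₀ne; rwa [hx₀] at this
    have hle : ‖T‖ ≤ ‖T x₀‖ := by
      apply ContinuousLinearMap.opNorm_le_bound _ (norm_nonneg _)
      intro x
      rcases eq_or_ne x 0 with rfl | hxne
      · simp
      · have hxpos : (0 : ℝ) < ‖x‖ := norm_pos_iff.mpr hxne
        set u : EuclideanSpace ℂ (Fin n) := ((‖x‖⁻¹ : ℝ) : ℂ) • x with hu
        have humem : u ∈ Metric.sphere (0 : EuclideanSpace ℂ (Fin n)) 1 := by
          rw [mem_sphere_zero_iff_norm, hu, norm_smul]
          simp [abs_of_pos, hxpos.ne', inv_mul_cancel₀ hxpos.ne']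
        have hub : ‖T u‖ ≤ ‖T x₀‖ := hx₀max humem
        have hTu : ‖T u‖ = ‖x‖⁻¹ * ‖T x‖ := by
          rw [hu, T.map_smul, norm_smul]
          simp [abs_of_pos (inv_pos.mpr hxpos)]
        rw [hTu] at hub
        calc ‖T x‖ = ‖x‖ * (‖x‖⁻¹ * ‖T x‖) := by field_simp
        _ ≤ ‖x‖ * ‖T x₀‖ := by
            apply mul_le_mul_of_nonneg_left hub hxpos.le
        _ = ‖T x₀‖ * ‖x‖ := mul_comm _ _
    linarith
end

section
/- If X is a Hermitian positive definite solution of X + A^* (conj X)⁻¹ A = Iₙ, then X > conj A · Aᵀ (i.e., X − conj(A)·Aᵀ = X − conj(A A^*) is positive definite) and X < Iₙ − A^* A. -/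
open Matrix
open scoped ComplexOrder

lemma posDef_conj_mul {n : ℕ} {M B : Matrix (Fin n) (Fin n) ℂ} (hM : M.PosDef)
    (hB : IsUnit B.det) : (Bᴴ * M * B).PosDef := by
  refine PosDef.of_dotProduct_mulVec_pos (Matrix.isHermitian_conjTranspose_mul_mul B hM.1) fun x hx => ?_
  have hBinj : Function.Injective (B.mulVec) :=
    Matrix.mulVec_injective_iff_isUnit.2 ((Matrix.isUnit_iff_isUnit_det B).2 hB)
  have hBx : B *ᵥ x ≠ 0 := fun h => hx (hBinj (by simpa using h))
  simpa only [star_mulVec, dotProduct_mulVec, vecMul_vecMul] using hM.dotProduct_mulVec_pos hBx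

open scoped MatrixOrder in
lemma inv_sub_one_posDef {n : ℕ} {Z : Matrix (Fin n) (Fin n) ℂ} (hZ : Z.PosDef)
    (h1Z : (1 - Z).PosDef) : (Z⁻¹ - 1).PosDef := by
  set S := CFC.sqrt (Z⁻¹) with hSdef
  have hS2 : S * S = Z⁻¹ := CFC.sqrt_mul_sqrt_self _ hZ.inv.posSemidef.nonneg
  have hSH : Sᴴ = S := (CFC.sqrt_nonneg (Z⁻¹)).posSemidef.1
  have hZd : IsUnit Z.det := (Matrix.isUnit_iff_isUnit_det Z).1 hZ.isUnit
  have hZid : IsUnit (Z⁻¹).det := (Matrix.isUnit_iff_isUnit_det _).1 hZ.inv.isUnit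
  have hSd : IsUnit S.det := by
    have h : S.det * S.det = (Z⁻¹).det := by rw [← Matrix.det_mul, hS2]
    exact isUnit_of_mul_isUnit_left (h ▸ hZid)
  have key : S * Z * S = 1 := by
    have hZinv : Z = (S * S)⁻¹ := by rw [hS2, Matrix.nonsing_inv_nonsing_inv Z hZd]
    rw [hZinv, Matrix.mul_inv_rev, ← Matrix.mul_assoc,
      Matrix.mul_nonsing_inv S hSd, Matrix.one_mul, Matrix.nonsing_inv_mul S hSd]
  have heq : Z⁻¹ - 1 = Sᴴ * (1 - Z) * S := by
    rw [hSH, Matrix.mul_sub, Matrix.sub_mul, Matrix.mul_one, hS2, key]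
  rw [heq]
  exact posDef_conj_mul h1Z hSd

theorem solution_bounds {n : ℕ} (A X : Matrix (Fin n) (Fin n) ℂ)
    (hA : IsUnit A.det) (hX : X.PosDef)
    (heq : X + Aᴴ * (X.map (starRingEnd ℂ))⁻¹ * A = 1) :
    (X - A.map (starRingEnd ℂ) * Aᵀ).PosDef ∧ ((1 - Aᴴ * A) - X).PosDef := by
  have hAH : IsUnit (Aᴴ).det := by
    rw [Matrix.det_conjTranspose]; exact hA.star
  have hYX : X.map (starRingEnd ℂ) = Xᵀ := by
    have h : X.map (starRingEnd ℂ) = (Xᴴ)ᵀ := by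
      ext i j; simp [Matrix.conjTranspose_apply]
    rw [h, hX.1]
  rw [hYX] at heq
  have hXt : Xᵀ.PosDef := hX.transpose
  have hXtd : IsUnit (Xᵀ).det := (Matrix.isUnit_iff_isUnit_det _).1 hXt.isUnit
  have hIX : Aᴴ * (Xᵀ)⁻¹ * A = 1 - X := eq_sub_of_add_eq' heq
  have h1X : (1 - X).PosDef := hIX ▸ posDef_conj_mul hXt.inv hA
  have h1Xd : IsUnit (1 - X).det := (Matrix.isUnit_iff_isUnit_det _).1 h1X.isUnit
  -- second bound
  have g2 : ((1 - Aᴴ * A) - X).PosDef := by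
    have h1Xt : (1 - Xᵀ).PosDef := by
      have := h1X.transpose
      simpa [Matrix.transpose_sub] using this
    have hM : ((Xᵀ)⁻¹ - 1).PosDef := inv_sub_one_posDef hXt h1Xt
    have hrw : (1 - Aᴴ * A) - X = Aᴴ * ((Xᵀ)⁻¹ - 1) * A := by
      rw [Matrix.mul_sub, Matrix.sub_mul, Matrix.mul_one, hIX]
      abel
    rw [hrw]
    exact posDef_conj_mul hM hA
  refine ⟨?_, g2⟩
  -- first bound
  have hXteq : Xᵀ = A * (1 - X)⁻¹ * Aᴴ := by
    have hinv : (Xᵀ)⁻¹ = (Aᴴ)⁻¹ * (1 - X) * A⁻¹ := by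
      calc (Xᵀ)⁻¹ = (Aᴴ)⁻¹ * (Aᴴ * (Xᵀ)⁻¹ * A) * A⁻¹ := by
            rw [← Matrix.mul_assoc, ← Matrix.mul_assoc, Matrix.nonsing_inv_mul _ hAH,
              Matrix.one_mul, Matrix.mul_assoc, Matrix.mul_nonsing_inv _ hA, Matrix.mul_one]
        _ = (Aᴴ)⁻¹ * (1 - X) * A⁻¹ := by rw [hIX]
    have h2 : Xᵀ = ((Aᴴ)⁻¹ * (1 - X) * A⁻¹)⁻¹ := by
      rw [← hinv, Matrix.nonsing_inv_nonsing_inv _ hXtd]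
    rw [h2, Matrix.mul_inv_rev, Matrix.mul_inv_rev,
      Matrix.nonsing_inv_nonsing_inv _ hA, Matrix.nonsing_inv_nonsing_inv _ hAH,
      Matrix.mul_assoc]
  have hM1 : ((1 - X)⁻¹ - 1).PosDef := by
    refine inv_sub_one_posDef h1X ?_
    simpa using hX
  have g1' : (Xᵀ - A * Aᴴ).PosDef := by
    have hrw : Xᵀ - A * Aᴴ = (Aᴴ)ᴴ * ((1 - X)⁻¹ - 1) * Aᴴ := by
      rw [Matrix.conjTranspose_conjTranspose, Matrix.mul_sub, Matrix.sub_mul,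
        Matrix.mul_one, hXteq]
    rw [hrw]
    exact posDef_conj_mul hM1 hAH
  have := g1'.transpose
  have hrw2 : (Xᵀ - A * Aᴴ)ᵀ = X - A.map (starRingEnd ℂ) * Aᵀ := by
    have h : (Aᴴ)ᵀ = A.map (starRingEnd ℂ) := by
      ext i j; simp [Matrix.conjTranspose_apply]
    rw [Matrix.transpose_sub, Matrix.transpose_transpose, Matrix.transpose_mul, h]
  rwa [hrw2] at this
end

section
/- If X is a Hermitian positive definite solution of X + A^* (conj X)⁻¹ A = Iₙ, then X > conj(A) (Iₙ − A A^*)⁻¹ Aᵀ, i.e., X − conj(A)(Iₙ − A A^*)⁻¹ Aᵀ is positive definite (note Iₙ − A A^* is positive definite in this situation). -/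
open Matrix
open scoped ComplexOrder

/-- A positive semidefinite matrix with nonzero determinant is positive definite. -/
lemma posDef_of_posSemidef_det_ne_zero {m : Type*} [Fintype m] [DecidableEq m]
    {M : Matrix m m ℂ} (h : M.PosSemidef) (hd : M.det ≠ 0) : M.PosDef := by
  refine posDef_iff_dotProduct_mulVec.mpr ⟨h.1, fun x hx => ?_⟩
  rcases ((posSemidef_iff_dotProduct_mulVec.mp h).2 x).lt_or_eq with hlt | he
  · exact hlt
  · exfalso
    have h0 : M *ᵥ x = 0 := (h.dotProduct_mulVec_zero_iff x).mp he.symm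
    have hx0 : x = 0 := by
      have h1 := congrArg (fun v => M⁻¹ *ᵥ v) h0
      simpa [Matrix.mulVec_mulVec,
        Matrix.nonsing_inv_mul M (isUnit_iff_ne_zero.mpr hd)] using h1
    exact hx hx0

theorem solution_lower_bound {n : ℕ} (A X : Matrix (Fin n) (Fin n) ℂ)
    (hX : X.PosDef)
    (heq : X + Aᴴ * (X.map (starRingEnd ℂ))⁻¹ * A = 1) :
    (X - A.map (starRingEnd ℂ) * (1 - A * Aᴴ)⁻¹ * Aᵀ).PosDef := by
  -- notation and basic facts
  have hmap : X.map (starRingEnd ℂ) = Xᵀ := by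
    ext i j
    have h0 := congrFun (congrFun hX.1 i) j
    simp only [conjTranspose_apply, transpose_apply, map_apply] at h0 ⊢
    simpa using (congrArg star h0).symm
  have hAt : Aᵀᴴ = A.map (starRingEnd ℂ) := by
    ext i j; simp [conjTranspose_apply]
  have hAt2 : Aᴴᵀ = Aᵀᴴ := by
    ext i j; simp [conjTranspose_apply]
  have hY : Xᵀ.PosDef := hX.transpose
  rw [hmap] at heq
  -- invertibility instances
  haveI : Invertible X := X.invertibleOfIsUnitDet hX.det_pos.ne'.isUnit
  haveI : Invertible Xᵀ := Xᵀ.invertibleOfIsUnitDet hY.det_pos.ne'.isUnit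
  haveI : Invertible (1 : Matrix (Fin n) (Fin n) ℂ) := invertibleOne
  -- the conjugated equation : Xᵀ + Aᵀ * X⁻¹ * (conj A) = 1
  have hYherm : Xᵀᴴ = Xᵀ := hY.1
  have hXt : Xᴴᵀ = Xᵀ := congrArg Matrix.transpose hX.1
  have heq2 : Xᵀ + Aᵀ * X⁻¹ * Aᵀᴴ = 1 := by
    have h1 := congrArg (fun M => (Mᴴ)ᵀ) heq
    simp only [conjTranspose_add, transpose_add, conjTranspose_mul, transpose_mul,
      Matrix.conjTranspose_nonsing_inv, Matrix.transpose_nonsing_inv,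
      conjTranspose_conjTranspose, conjTranspose_one, transpose_one,
      Matrix.mul_assoc, hYherm, transpose_transpose, hAt2, hX.1, hXt] at h1
    rw [← Matrix.mul_assoc] at h1
    exact h1
  have hXeq : X = 1 - Aᴴ * (Xᵀ)⁻¹ * A := eq_sub_of_add_eq heq
  have hYeq : Xᵀ = 1 - Aᵀ * X⁻¹ * Aᵀᴴ := eq_sub_of_add_eq heq2
  -- Step 1 : Xᵀ - A * Aᴴ is positive definite (Schur complement on [[Xᵀ, A],[Aᴴ, 1]])
  have hP : (fromBlocks Xᵀ A Aᴴ 1).PosSemidef := by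
    rw [PosDef.fromBlocks₁₁ A 1 hY, ← hXeq]
    exact hX.posSemidef
  have hYAAh_psd : (Xᵀ - A * Aᴴ).PosSemidef := by
    have := (PosDef.fromBlocks₂₂ Xᵀ A Matrix.PosDef.one).mp hP
    simpa using this
  have hdetP : (fromBlocks Xᵀ A Aᴴ 1).det ≠ 0 := by
    rw [Matrix.det_fromBlocks₁₁, Matrix.invOf_eq_nonsing_inv, ← hXeq]
    exact mul_ne_zero hY.det_pos.ne' hX.det_pos.ne'
  have hdetYA : (Xᵀ - A * Aᴴ).det ≠ 0 := by
    have h2 : (fromBlocks Xᵀ A Aᴴ 1).det = (Xᵀ - A * Aᴴ).det := by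
      rw [Matrix.det_fromBlocks₂₂, Matrix.invOf_eq_nonsing_inv]
      simp
    intro h; rw [h2, h] at hdetP; exact hdetP rfl
  have hYAAh : (Xᵀ - A * Aᴴ).PosDef := posDef_of_posSemidef_det_ne_zero hYAAh_psd hdetYA
  -- Step 2 : 1 - A * Aᴴ is positive definite
  have hSchur2 : (1 - A * Aᴴ) - Aᵀ * X⁻¹ * Aᵀᴴ = Xᵀ - A * Aᴴ := by
    rw [hYeq]; abel
  have hpsd3 : (Aᵀ * X⁻¹ * Aᵀᴴ).PosSemidef :=
    (hX.inv.posSemidef).mul_mul_conjTranspose_same Aᵀ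
  have hM : (1 - A * Aᴴ).PosDef := by
    have h3 : (1 : Matrix (Fin n) (Fin n) ℂ) - A * Aᴴ = (Xᵀ - A * Aᴴ) + Aᵀ * X⁻¹ * Aᵀᴴ := by
      rw [hYeq]; abel
    rw [h3]
    exact hYAAh.add_posSemidef hpsd3
  haveI : Invertible (1 - A * Aᴴ) :=
    (1 - A * Aᴴ).invertibleOfIsUnitDet hM.det_pos.ne'.isUnit
  -- Step 3 : Schur complement on [[1 - A*Aᴴ, Aᵀ],[conj A, X]]
  have hQ : (fromBlocks (1 - A * Aᴴ) Aᵀ Aᵀᴴ X).PosSemidef := by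
    rw [PosDef.fromBlocks₂₂ _ Aᵀ hX, hSchur2]
    exact hYAAh.posSemidef
  have hfinal_psd : (X - Aᵀᴴ * (1 - A * Aᴴ)⁻¹ * Aᵀ).PosSemidef :=
    (PosDef.fromBlocks₁₁ Aᵀ X hM).mp hQ
  have hdetQ : (fromBlocks (1 - A * Aᴴ) Aᵀ Aᵀᴴ X).det ≠ 0 := by
    rw [Matrix.det_fromBlocks₂₂, Matrix.invOf_eq_nonsing_inv, hSchur2]
    exact mul_ne_zero hX.det_pos.ne' hYAAh.det_pos.ne'
  have hdetF : (X - Aᵀᴴ * (1 - A * Aᴴ)⁻¹ * Aᵀ).det ≠ 0 := by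
    have h4 : (fromBlocks (1 - A * Aᴴ) Aᵀ Aᵀᴴ X).det
        = (1 - A * Aᴴ).det * (X - Aᵀᴴ * (1 - A * Aᴴ)⁻¹ * Aᵀ).det := by
      rw [Matrix.det_fromBlocks₁₁, Matrix.invOf_eq_nonsing_inv]
    intro h; rw [h4, h, mul_zero] at hdetQ; exact hdetQ rfl
  have hfin := posDef_of_posSemidef_det_ne_zero hfinal_psd hdetF
  rwa [hAt] at hfin
end
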